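/- Let R be a commutative ring, n ≥ 1, and let A = (a_{ij}) be an n × n matrix over R. For each i, let s_i be the R-linear endomorphism of R^n defined on the standard basis vectors by s_i(e_j) = e_j − a_{ij} e_i, and let c = s_1 ∘ s_2 ∘ ⋯ ∘ s_n. Then the characteristic polynomial of c is given by det(t·id − c) = det(B(t)), where B(t) is the n × n matrix over R[t] with entries B(t)_{ij} = t·a_{ij} for i < j, B(t)_{ii} = t − 1 + a_{ii}, and B(t)_{ij} = a_{ij} for i > j. -/

import Mathlib

open Polynomial

section Aux

open Matrix

variable {R : Type*} [CommRing R] {n : ℕ}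

/-- matrix of the pseudo-reflection `s_i`. -/
private def Lm (A : Matrix (Fin n) (Fin n) R) (i : Fin n) : Matrix (Fin n) (Fin n) R :=
  Matrix.of fun k j => (if k = j then (1 : R) else 0) - (if k = i then A i j else 0)

/-- `I + U`, `U` the strict upper triangular part of `A`. -/
private def Wm (A : Matrix (Fin n) (Fin n) R) : Matrix (Fin n) (Fin n) R :=
  Matrix.of fun i j => (if i = j then (1 : R) else 0) + (if i < j then A i j else 0)

private def st (A : Matrix (Fin n) (Fin n) R) (v : Fin n → R) (k : Fin n) : Fin n → R :=
  fun j => v j - v k * A k j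

private lemma vecMul_Lm (A : Matrix (Fin n) (Fin n) R) (v : Fin n → R) (k : Fin n) :
    v ᵥ* Lm A k = st A v k := by
  funext j
  simp only [Matrix.vecMul, dotProduct, Lm, Matrix.of_apply, st, mul_sub, mul_ite, mul_one,
    mul_zero, Finset.sum_sub_distrib]
  congr 1 <;> simp [Finset.sum_ite_eq']

private lemma vecMul_listProd (A : Matrix (Fin n) (Fin n) R) (l : List (Fin n)) (v : Fin n → R) :
    v ᵥ* (l.map (Lm A)).prod = l.foldl (st A) v := by
  induction l generalizing v with
  | nil => simp
  | cons a t ih =>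
    rw [List.map_cons, List.prod_cons, ← Matrix.vecMul_vecMul, vecMul_Lm, List.foldl_cons]
    exact ih _

private lemma foldl_st_of_zero (A : Matrix (Fin n) (Fin n) R) (l : List (Fin n)) (v : Fin n → R)
    (h : ∀ k ∈ l, v k = 0) : l.foldl (st A) v = v := by
  induction l with
  | nil => rfl
  | cons a t ih =>
    have ha : v a = 0 := h a List.mem_cons_self
    have hst : st A v a = v := by funext j; simp [st, ha]
    rw [List.foldl_cons, hst]
    exact ih fun k hk => h k (List.mem_cons_of_mem _ hk)

private lemma row_W_mul (A : Matrix (Fin n) (Fin n) R) (i : Fin n) :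
    (Wm A i) ᵥ* ((List.finRange n).map (Lm A)).prod = fun j => Wm A i j - A i j := by
  obtain ⟨l1, l2, hsplit⟩ := List.append_of_mem (List.mem_finRange i)
  have hp : (l1 ++ i :: l2).Pairwise (· < ·) := hsplit ▸ List.pairwise_lt_finRange n
  have h1 : ∀ k ∈ l1, k < i := fun k hk =>
    (List.pairwise_append.mp hp).2.2 k hk i List.mem_cons_self
  have h2 : ∀ k ∈ l2, i < k := (List.pairwise_cons.mp (List.pairwise_append.mp hp).2.1).1
  rw [vecMul_listProd, hsplit, List.foldl_append, List.foldl_cons,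
    foldl_st_of_zero A l1 _ (fun k hk => by
      simp [Wm, (h1 k hk).ne', not_lt.mpr (h1 k hk).le])]
  have hWii : Wm A i i = 1 := by simp [Wm]
  have hstep : st A (Wm A i) i = fun j => Wm A i j - A i j := by
    funext j; simp [st, hWii]
  rw [hstep]
  exact foldl_st_of_zero A l2 _ (fun k hk => by
    simp [Wm, (h2 k hk).ne, h2 k hk])

private lemma W_mul_M (A : Matrix (Fin n) (Fin n) R) :
    Wm A * ((List.finRange n).map (Lm A)).prod =
      Matrix.of fun i j => Wm A i j - A i j := by
  refine Matrix.ext fun i j => ?_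
  have h := congrFun (row_W_mul A i) j
  simpa [Matrix.mul_apply, Matrix.vecMul, dotProduct] using h

private lemma mapC_mul_charmatrix (A : Matrix (Fin n) (Fin n) R) (N : Matrix (Fin n) (Fin n) R) :
    (Wm A).map C * N.charmatrix =
      Matrix.of fun i j => X * C (Wm A i j) - C ((Wm A * N) i j) := by
  refine Matrix.ext fun i j => ?_
  rw [Matrix.mul_apply, Matrix.of_apply, Matrix.mul_apply, map_sum]
  rw [show X * C (Wm A i j) = ∑ k : Fin n, if k = j then X * C (Wm A i k) else 0 by
    rw [Finset.sum_ite_eq']; simp]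
  rw [← Finset.sum_sub_distrib]
  refine Finset.sum_congr rfl fun k _ => ?_
  by_cases hk : k = j
  · subst hk
    rw [if_pos rfl, Matrix.charmatrix_apply_eq, Matrix.map_apply, _root_.map_mul]
    ring
  · rw [if_neg hk, Matrix.charmatrix_apply_ne _ _ _ hk, Matrix.map_apply, _root_.map_mul]
    ring

end Aux

/-- Bourbaki, Groupes et algèbres de Lie, Ch. V, § 6, Exercice 3:
the characteristic polynomial of a product `c = s_1 ∘ ⋯ ∘ s_n` of pseudo-reflections
`s_i(e_j) = e_j − a_{ij} e_i` equals `det B(t)` with `B(t)_{ij} = t·a_{ij}` for `i < j`,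
`B(t)_{ii} = t − 1 + a_{ii}` and `B(t)_{ij} = a_{ij}` for `i > j`. -/
theorem charpoly_prod_pseudoReflections
    (R : Type*) [CommRing R] (n : ℕ) (hn : 1 ≤ n)
    (A : Matrix (Fin n) (Fin n) R)
    (s : Fin n → Module.End R (Fin n → R))
    (hs : ∀ i j : Fin n, s i (Pi.single j 1) = (Pi.single j 1 : Fin n → R) - A i j • (Pi.single i 1 : Fin n → R)) :
    LinearMap.charpoly (((List.finRange n).map s).prod) =
      Matrix.det (Matrix.of fun i j : Fin n =>
        if i < j then X * C (A i j)
        else if i = j then X - 1 + C (A i j)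
        else C (A i j)) := by
  classical
  rcases subsingleton_or_nontrivial R with hR | hR
  · exact Subsingleton.elim _ _
  set b := Pi.basisFun R (Fin n) with hb
  have hLi : ∀ i, LinearMap.toMatrix b b (s i) = Lm A i := by
    intro i
    ext k j
    rw [LinearMap.toMatrix_apply]
    simp [hb, hs, Lm, Pi.single_apply]
  have key : ∀ l : List (Fin n),
      LinearMap.toMatrix b b ((l.map s).prod) = (l.map (Lm A)).prod := by
    intro l
    induction l with
    | nil => simp [LinearMap.toMatrix_one]
    | cons a t ih => simp [List.prod_cons, LinearMap.toMatrix_mul, ih, hLi]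
  rw [← LinearMap.charpoly_toMatrix _ b, key]
  set M := ((List.finRange n).map (Lm A)).prod with hM
  have hdet : ((Wm A).map C).det = 1 := by
    rw [Matrix.det_of_upperTriangular]
    · simp [Wm, Matrix.map_apply]
    · intro i j hij
      have hij' : j < i := hij
      simp [Wm, Matrix.map_apply, hij'.ne', not_lt.mpr hij'.le]
  have hchar : M.charpoly = (((Wm A).map C) * M.charmatrix).det := by
    rw [Matrix.det_mul, hdet, one_mul, Matrix.charpoly]
  rw [hchar, mapC_mul_charmatrix, W_mul_M]
  congr 1
  ext i j
  rcases lt_trichotomy i j with h | h | h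
  · simp [Wm, h, h.ne, h.ne']
  · subst h
    simp only [Matrix.of_apply, lt_irrefl, if_false, if_pos rfl, if_true]
    simp [Wm]
    ring
  · simp [Wm, h, h.ne', not_lt.mpr h.le]
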